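/- Let G = (K, I; E) be a split graph, C ⊆ K, and v ∈ K \ C with |C + v| ≤ c. Suppose T_C and T_{C+v} are c-colorable sets of size at least k (with T defined as: T_X = X ∪ I if |X| < c, else X ∪ (I \ {u : X ⊆ N(u)})). Then T_C and T_{C+v} are connected by a TAR(k)-reconfiguration sequence if and only if |T_{C+v}| ≥ k + 1. -/

import Mathlib

open Finset

variable {V : Type*}

/-- `S` is a `c`-colorable vertex set in `G`. -/
def ColSet (G : SimpleGraph V) (c : ℕ) (S : Finset V) : Prop :=
  (G.induce (S : Set V)).Colorable c

/-- One TAR(k) step between `c`-colorable sets. -/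
def TARStep (G : SimpleGraph V) (c k : ℕ) [DecidableEq V] (A B : Finset V) : Prop :=
  ColSet G c A ∧ ColSet G c B ∧ k ≤ A.card ∧ k ≤ B.card ∧ (symmDiff A B).card = 1

/-- One TJ step between `c`-colorable sets. -/
def TJStep (G : SimpleGraph V) (c : ℕ) [DecidableEq V] (A B : Finset V) : Prop :=
  ColSet G c A ∧ ColSet G c B ∧ (A \ B).card = 1 ∧ (B \ A).card = 1

/-- `l` is a TAR(k)-reconfiguration sequence from `S` to `S'`. -/
def TARSeq (G : SimpleGraph V) (c k : ℕ) [DecidableEq V] (S S' : Finset V)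
    (l : List (Finset V)) : Prop :=
  l.head? = some S ∧ l.getLast? = some S' ∧ l.Chain' (TARStep G c k)

def TJSeq (G : SimpleGraph V) (c : ℕ) [DecidableEq V] (S S' : Finset V)
    (l : List (Finset V)) : Prop :=
  l.head? = some S ∧ l.getLast? = some S' ∧ l.Chain' (TJStep G c)

def TARReach (G : SimpleGraph V) (c k : ℕ) [DecidableEq V] (S S' : Finset V) : Prop :=
  ∃ l, TARSeq G c k S S' l

/-- For a split graph with independent part `I`, the canonical maximal `c`-colorable
set with clique part `C`. -/
def splitTC (G : SimpleGraph V) [DecidableEq V] [DecidableRel G.Adj]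
    (c : ℕ) (I C : Finset V) : Finset V :=
  if C.card < c then C ∪ I
  else C ∪ I.filter (fun u => ¬ ∀ v ∈ C, G.Adj v u)

section Helpers
open Relation
variable {V : Type*}

lemma colSet_mono {G : SimpleGraph V} {c : ℕ} {A B : Finset V}
    (h : ColSet G c A) (hBA : B ⊆ A) : ColSet G c B := by
  refine SimpleGraph.Colorable.of_hom (RelEmbedding.toRelHom ?_) h
  exact { toFun := Set.inclusion (by exact_mod_cast hBA),
          inj' := Set.inclusion_injective (by exact_mod_cast hBA),
          map_rel_iff' := by intro a b; rfl }

lemma not_colSet_of_clique {G : SimpleGraph V} {c : ℕ} {T S : Finset V}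
    (hT : G.IsClique (T : Set V)) (hTS : T ⊆ S) (hc : c < T.card) :
    ¬ ColSet G c S := by
  rintro ⟨f⟩
  have hinj : Function.Injective
      (fun x : {x // x ∈ T} => f ⟨x.1, by exact_mod_cast hTS x.2⟩) := by
    intro x y hxy
    by_contra hne
    have hadj : G.Adj x.1 y.1 :=
      hT (Finset.mem_coe.mpr x.2) (Finset.mem_coe.mpr y.2)
        (fun h => hne (Subtype.ext h))
    exact f.valid (by simpa using hadj) hxy
  have := Fintype.card_le_of_injective _ hinj
  simp [Fintype.card_coe] at this
  omega

lemma tarReach_head {G : SimpleGraph V} {c k : ℕ} [DecidableEq V] {A B C : Finset V}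
    (h : TARStep G c k A B) (h2 : TARReach G c k B C) : TARReach G c k A C := by
  obtain ⟨l, hh, hl, hc⟩ := h2
  match l, hh with
  | b :: t, hh =>
    have hb : b = B := by simpa using hh
    exact ⟨A :: b :: t, rfl, by simpa using hl, List.isChain_cons_cons.mpr ⟨hb ▸ h, hc⟩⟩

lemma tarReach_of_rtg {G : SimpleGraph V} {c k : ℕ} [DecidableEq V] {A B : Finset V}
    (h : ReflTransGen (TARStep G c k) A B) : TARReach G c k A B := by
  induction h using ReflTransGen.head_induction_on with
  | refl => exact ⟨[B], rfl, rfl, List.isChain_singleton _⟩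
  | head hstep _ ih => exact tarReach_head hstep ih

lemma rtg_of_tarSeq {G : SimpleGraph V} {c k : ℕ} [DecidableEq V] :
    ∀ (l : List (Finset V)) {A B : Finset V}, TARSeq G c k A B l →
      ReflTransGen (TARStep G c k) A B
  | [], _, _, ⟨h1, _, _⟩ => by simp at h1
  | [a], A, B, ⟨h1, h2, _⟩ => by
      have ha : a = A := by simpa using h1
      have hb : a = B := by simpa using h2
      exact ha ▸ hb ▸ ReflTransGen.refl
  | a :: b :: t, A, B, ⟨h1, h2, h3⟩ => by
      have ha : a = A := by simpa using h1
      have h4 := List.isChain_cons_cons.mp h3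
      have ih := rtg_of_tarSeq (b :: t) (A := b) (B := B)
        ⟨rfl, by simpa using h2, h4.2⟩
      exact ReflTransGen.head (ha ▸ h4.1) ih

lemma symmDiff_erase' {A : Finset V} [DecidableEq V] {w : V} (hw : w ∈ A) :
    symmDiff A (A.erase w) = {w} := by
  ext x
  simp only [Finset.mem_symmDiff, Finset.mem_erase, Finset.mem_singleton]
  constructor
  · rintro (⟨hx, h⟩ | ⟨⟨_, h⟩, h'⟩) <;> tauto
  · rintro rfl; tauto

lemma symmDiff_insert' {A : Finset V} [DecidableEq V] {w : V} (hw : w ∉ A) :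
    symmDiff A (insert w A) = {w} := by
  ext x
  simp only [Finset.mem_symmDiff, Finset.mem_insert, Finset.mem_singleton]
  constructor
  · rintro (⟨hx, h⟩ | ⟨h, h'⟩) <;> tauto
  · rintro rfl; tauto

lemma rtg_erase {G : SimpleGraph V} {c k : ℕ} [DecidableEq V] :
    ∀ (n : ℕ) (A B : Finset V), (A \ B).card = n → B ⊆ A → ColSet G c A →
      k ≤ B.card → ReflTransGen (TARStep G c k) A B := by
  intro n
  induction n with
  | zero =>
    intro A B h hBA _ _
    have : A = B := Finset.Subset.antisymm
      (Finset.sdiff_eq_empty_iff_subset.mp (Finset.card_eq_zero.mp h)) hBA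
    exact this ▸ ReflTransGen.refl
  | succ n ih =>
    intro A B h hBA hcA hkB
    have hne : (A \ B).Nonempty := Finset.card_pos.mp (by omega)
    obtain ⟨w, hw⟩ := hne
    have hwA : w ∈ A := (Finset.mem_sdiff.mp hw).1
    have hwB : w ∉ B := (Finset.mem_sdiff.mp hw).2
    have hBA' : B ⊆ A.erase w := Finset.subset_erase.mpr ⟨hBA, hwB⟩
    have hcA' : ColSet G c (A.erase w) := colSet_mono hcA (Finset.erase_subset _ _)
    have hstep : TARStep G c k A (A.erase w) :=
      ⟨hcA, hcA', le_trans hkB (Finset.card_le_card hBA),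
        le_trans hkB (Finset.card_le_card hBA'), by rw [symmDiff_erase' hwA]; simp⟩
    refine ReflTransGen.head hstep (ih (A.erase w) B ?_ hBA' hcA' hkB)
    rw [Finset.erase_sdiff_comm, Finset.card_erase_of_mem hw]
    omega

end Helpers

theorem splitTC_reachable_iff {V : Type*} [DecidableEq V] (G : SimpleGraph V)
    [DecidableRel G.Adj] (K I : Finset V)
    (hclique : G.IsClique K) (hindep : ∀ u ∈ I, ∀ v ∈ I, ¬ G.Adj u v)
    (hdisj : Disjoint K I) (hcover : ∀ v : V, v ∈ K ∨ v ∈ I) (c k : ℕ)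
    (C : Finset V) (hCK : C ⊆ K) (v : V) (hvK : v ∈ K) (hvC : v ∉ C)
    (hsize : (insert v C).card ≤ c)
    (hcol : ColSet G c (splitTC G c I C)) (hcol' : ColSet G c (splitTC G c I (insert v C)))
    (hk : k ≤ (splitTC G c I C).card) (hk' : k ≤ (splitTC G c I (insert v C)).card) :
    TARReach G c k (splitTC G c I C) (splitTC G c I (insert v C)) ↔
      k + 1 ≤ (splitTC G c I (insert v C)).card := by
  classical
  have hvI : v ∉ I := fun h => Finset.disjoint_left.mp hdisj hvK h
  have hcardins : (insert v C).card = C.card + 1 := Finset.card_insert_of_notMem hvC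
  rcases lt_or_eq_of_le hsize with hlt | heq
  · -- case |C+v| < c
    have hClt : C.card < c := by omega
    have e1 : splitTC G c I C = C ∪ I := by simp only [splitTC]; rw [if_pos hClt]
    have e2 : splitTC G c I (insert v C) = insert v (C ∪ I) := by
      simp only [splitTC]; rw [if_pos hlt, Finset.insert_union]
    rw [e1] at hcol hk; rw [e2] at hcol' hk'; rw [e1, e2]
    have hvCI : v ∉ C ∪ I := by simp [hvC, hvI]
    refine iff_of_true ?_ ?_
    · exact tarReach_of_rtg (Relation.ReflTransGen.single
        ⟨hcol, hcol', hk, hk', by rw [symmDiff_insert' hvCI]; simp⟩)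
    · rw [Finset.card_insert_of_notMem hvCI]; omega
  · -- case |C+v| = c
    have hClt : C.card < c := by omega
    have e1 : splitTC G c I C = C ∪ I := by simp only [splitTC]; rw [if_pos hClt]
    have e2 : splitTC G c I (insert v C) =
        insert v C ∪ I.filter (fun u => ¬ ∀ x ∈ insert v C, G.Adj x u) := by
      simp only [splitTC]; rw [if_neg (by omega)]
    rw [e1] at hcol hk; rw [e2] at hcol' hk'; rw [e1, e2]
    set F := I.filter (fun u => ¬ ∀ x ∈ insert v C, G.Adj x u) with hF
    set T' := insert v C ∪ F with hT'
    have hsubK : insert v C ⊆ K := Finset.insert_subset hvK hCK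
    have hvT' : v ∈ T' := Finset.mem_union_left _ (Finset.mem_insert_self _ _)
    have hmax : ∀ w, w ∉ T' → ¬ ColSet G c (insert w T') := by
      intro w hw
      have hwvc : w ∉ insert v C := fun h => hw (Finset.mem_union_left _ h)
      have hclq : G.IsClique (↑(insert w (insert v C)) : Set V) := by
        rcases hcover w with hwK | hwI
        · exact hclique.subset
            (Finset.coe_subset.mpr (Finset.insert_subset hwK hsubK))
        · have hwF : w ∉ F := fun h => hw (Finset.mem_union_right _ h)
          have hadj : ∀ x ∈ insert v C, G.Adj x w := by
            rw [hF, Finset.mem_filter] at hwF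
            by_contra hcon
            exact hwF ⟨hwI, hcon⟩
          intro a ha b hb hne
          have ha' : a = w ∨ a ∈ insert v C :=
            Finset.mem_insert.mp (Finset.mem_coe.mp ha)
          have hb' : b = w ∨ b ∈ insert v C :=
            Finset.mem_insert.mp (Finset.mem_coe.mp hb)
          rcases ha' with rfl | ha' <;> rcases hb' with rfl | hb'
          · exact absurd rfl hne
          · exact (hadj b hb').symm
          · exact hadj a ha'
          · exact hclique (Finset.mem_coe.mpr (hsubK ha'))
              (Finset.mem_coe.mpr (hsubK hb')) hne
      have hcardwc : (insert w (insert v C)).card = c + 1 := by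
        rw [Finset.card_insert_of_notMem hwvc, heq]
      exact not_colSet_of_clique hclq
        (Finset.insert_subset_insert _ Finset.subset_union_left)
        (by rw [hcardwc]; omega)
    constructor
    · intro hreach
      by_contra hcon
      have hTk : T'.card = k := by omega
      have hk1 : 1 ≤ k := by
        have := Finset.card_pos.mpr ⟨v, hvT'⟩; omega
      obtain ⟨l, hl⟩ := hreach
      have hrtg := rtg_of_tarSeq l hl
      rcases Relation.ReflTransGen.cases_tail hrtg with hEq | ⟨B, _, hstep⟩
      · have : v ∈ C ∪ I := hEq ▸ hvT'
        simp [hvC, hvI] at this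
      · obtain ⟨hcB, hcT, hkB, hkT, hsd⟩ := hstep
        obtain ⟨w, hw⟩ := Finset.card_eq_one.mp hsd
        have hwmem : w ∈ symmDiff B T' := hw ▸ Finset.mem_singleton_self w
        have hiff : ∀ x, x ∈ symmDiff B T' ↔ x = w := by
          intro x; rw [hw, Finset.mem_singleton]
        rcases Finset.mem_symmDiff.mp hwmem with ⟨hwB, hwT⟩ | ⟨hwT, hwB⟩
        · have hB : B = insert w T' := by
            ext x
            rw [Finset.mem_insert]
            have hx := hiff x
            rw [Finset.mem_symmDiff] at hx
            by_cases hxw : x = w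
            · subst hxw; tauto
            · constructor
              · intro hxB
                right; by_contra h'
                exact hxw (hx.mp (Or.inl ⟨hxB, h'⟩))
              · rintro (rfl | hxT)
                · exact hwB
                · by_contra h'
                  exact hxw (hx.mp (Or.inr ⟨hxT, h'⟩))
          rw [hB] at hcB
          exact hmax w hwT hcB
        · have hB : T' = insert w B := by
            ext x
            rw [Finset.mem_insert]
            have hx := hiff x
            rw [Finset.mem_symmDiff] at hx
            by_cases hxw : x = w
            · subst hxw; tauto
            · constructor
              · intro hxT; right; by_contra h'
                exact hxw (hx.mp (Or.inr ⟨hxT, h'⟩))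
              · rintro (rfl | hxB)
                · exact hwT
                · by_contra h'
                  exact hxw (hx.mp (Or.inl ⟨hxB, h'⟩))
          have : T'.card = B.card + 1 := by
            rw [hB, Finset.card_insert_of_notMem hwB]
          omega
    · intro hks
      set B₀ := C ∪ F with hB₀
      have hFI : F ⊆ I := Finset.filter_subset _ _
      have hT'B : T' = insert v B₀ := by rw [hT', hB₀, Finset.insert_union]
      have hvB : v ∉ B₀ := by
        rw [hB₀]; simp only [Finset.mem_union]
        rintro (h | h)
        · exact hvC h
        · exact hvI (hFI h)
      have hB₀sub : B₀ ⊆ C ∪ I :=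
        Finset.union_subset Finset.subset_union_left
          (hFI.trans Finset.subset_union_right)
      have hcardT : T'.card = B₀.card + 1 := by
        rw [hT'B, Finset.card_insert_of_notMem hvB]
      have hkB : k ≤ B₀.card := by omega
      have hcolB : ColSet G c B₀ :=
        colSet_mono hcol' (by rw [hT'B]; exact Finset.subset_insert _ _)
      have hstep : TARStep G c k B₀ T' :=
        ⟨hcolB, hcol', hkB, by omega, by rw [hT'B, symmDiff_insert' hvB]; simp⟩
      exact tarReach_of_rtg
        ((rtg_erase _ (C ∪ I) B₀ rfl hB₀sub hcol hkB).tail hstep)
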